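/- arXiv:1404.7341 — 5 statements merged into one kernel-verified Lean document; each statement's English description precedes it below -/
import Mathlib

section
/- For every monomial ideal I in the polynomial ring S = k[x_0,...,x_n] and every j ≥ 0, the Hilbert function of S/I satisfies (n+j+1)·h_{S/I}(j) ≥ (j+1)·h_{S/I}(j+1). -/
open MvPolynomial Finsupp

namespace MacaulayAux

lemma degree_eq_sum {m : ℕ} (d : Fin m →₀ ℕ) : d.degree = ∑ i, d i :=
  Finset.sum_subset (Finset.subset_univ _) (fun i _ hi => Finsupp.notMem_support_iff.mp hi)

/-- Exponents of degree `j` whose monomial is not in the monomial ideal generated by `G`. -/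
noncomputable def Mset (n : ℕ) (G : Set (Fin (n+1) →₀ ℕ)) (j : ℕ) : Finset (Fin (n+1) →₀ ℕ) :=
  @Finset.filter _ (fun d => ¬ ∃ s ∈ G, s ≤ d) (Classical.decPred _)
    (Finset.finsuppAntidiag Finset.univ j)

lemma mem_Mset {n : ℕ} {G : Set (Fin (n+1) →₀ ℕ)} {j : ℕ} {d : Fin (n+1) →₀ ℕ} :
    d ∈ Mset n G j ↔ d.degree = j ∧ ¬ ∃ s ∈ G, s ≤ d := by
  simp only [Mset, Finset.mem_filter, Finset.mem_finsuppAntidiag, Finset.subset_univ, and_true,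
    degree_eq_sum]

lemma rank_eq {k : Type} [Field k] {n : ℕ} (G : Set (Fin (n+1) →₀ ℕ)) (j : ℕ) :
    Module.finrank k
      ((MvPolynomial.homogeneousSubmodule (Fin (n + 1)) k j).map
        (Ideal.Quotient.mkₐ k
          (Ideal.span ((fun d => (MvPolynomial.monomial d (1 : k))) '' G))).toLinearMap)
      = (Mset n G j).card := by
  set I := Ideal.span ((fun d => (MvPolynomial.monomial d (1 : k))) '' G) with hIdef
  have hmem : ∀ p : MvPolynomial (Fin (n+1)) k,
      p ∈ I ↔ ∀ d ∈ p.support, ∃ s ∈ G, s ≤ d := fun p =>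
    MvPolynomial.mem_ideal_span_monomial_image
  set v : (Mset n G j) → (MvPolynomial (Fin (n+1)) k ⧸ I) :=
    fun d => Ideal.Quotient.mkₐ k I (monomial (d : Fin (n+1) →₀ ℕ) (1 : k)) with hv
  have hind : LinearIndependent k v := by
    rw [linearIndependent_iff']
    intro s g hsum i hi
    by_contra hgi
    set p : MvPolynomial (Fin (n+1)) k :=
      ∑ d ∈ s, monomial (d : Fin (n+1) →₀ ℕ) (g d) with hp
    have hmk : Ideal.Quotient.mkₐ k I p = 0 := by
      rw [hp, map_sum, ← hsum]
      apply Finset.sum_congr rfl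
      intro d _
      rw [hv, ← map_smul, smul_monomial, smul_eq_mul, mul_one]
    have hpI : p ∈ I := by
      rw [Ideal.Quotient.mkₐ_eq_mk] at hmk
      exact (Ideal.Quotient.eq_zero_iff_mem).mp hmk
    have hcoeff : MvPolynomial.coeff (i : Fin (n+1) →₀ ℕ) p = g i := by
      rw [hp, MvPolynomial.coeff_sum]
      rw [Finset.sum_eq_single_of_mem i hi]
      · rw [MvPolynomial.coeff_monomial, if_pos rfl]
      · intro b _ hb
        rw [MvPolynomial.coeff_monomial, if_neg (fun h => hb (Subtype.ext h))]
    have hsupp : (i : Fin (n+1) →₀ ℕ) ∈ p.support := by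
      rw [MvPolynomial.mem_support_iff, hcoeff]; exact hgi
    obtain ⟨t, ht, hle⟩ := (hmem p).mp hpI _ hsupp
    exact (mem_Mset.mp i.2).2 ⟨t, ht, hle⟩
  have hspan : (MvPolynomial.homogeneousSubmodule (Fin (n + 1)) k j).map
      (Ideal.Quotient.mkₐ k I).toLinearMap = Submodule.span k (Set.range v) := by
    rw [MvPolynomial.homogeneousSubmodule_eq_finsupp_supported,
      AddMonoidAlgebra.supported_eq_span_single, Submodule.map_span]
    apply le_antisymm
    · rw [Submodule.span_le]
      rintro x ⟨q, ⟨d, hd, rfl⟩, rfl⟩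
      by_cases hP : ∃ s ∈ G, s ≤ d
      · have hz : (Ideal.Quotient.mkₐ k I).toLinearMap (AddMonoidAlgebra.single d 1) = 0 := by
          show Ideal.Quotient.mkₐ k I (AddMonoidAlgebra.single d 1) = 0
          rw [Ideal.Quotient.mkₐ_eq_mk, single_eq_monomial, Ideal.Quotient.eq_zero_iff_mem,
            hmem]
          intro d' hd'
          have : d' = d := by
            have := MvPolynomial.support_monomial_subset hd'
            simpa using this
          rw [this]; exact hP
        rw [hz]
        exact Submodule.zero_mem _
      · refine Submodule.subset_span ⟨⟨d, mem_Mset.mpr ⟨hd, hP⟩⟩, ?_⟩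
        simp [hv, single_eq_monomial, Ideal.Quotient.mkₐ_eq_mk]
    · rw [Submodule.span_le]
      rintro x ⟨⟨d, hd⟩, rfl⟩
      refine Submodule.subset_span ⟨AddMonoidAlgebra.single d 1, ⟨d, (mem_Mset.mp hd).1, rfl⟩, ?_⟩
      simp [hv, single_eq_monomial, Ideal.Quotient.mkₐ_eq_mk]
  rw [hspan, finrank_span_eq_card hind, Fintype.card_coe]

lemma sum_single_apply {n : ℕ} (i : Fin (n+1)) :
    ∑ x : Fin (n+1), (Finsupp.single i 1 : Fin (n+1) →₀ ℕ) x = 1 := by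
  simp [Finsupp.single_apply]

set_option maxHeartbeats 1000000 in
lemma card_ineq {n : ℕ} (G : Set (Fin (n+1) →₀ ℕ)) (j : ℕ) :
    (j + 1) * (Mset n G (j+1)).card ≤ (n + j + 1) * (Mset n G j).card := by
  classical
  have key : ∀ i : Fin (n+1),
      ∑ d ∈ Mset n G (j+1), d i ≤ ∑ d ∈ Mset n G j, (d i + 1) := by
    intro i
    set A := (Mset n G (j+1)).filter (fun d => d i ≠ 0) with hA
    have h1 : ∑ d ∈ Mset n G (j+1), d i = ∑ d ∈ A, d i :=
      (Finset.sum_filter_ne_zero _).symm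
    have hle1 : ∀ d ∈ A, Finsupp.single i 1 ≤ d := by
      intro d hd
      exact single_le_iff.mpr (Nat.one_le_iff_ne_zero.mpr (Finset.mem_filter.mp hd).2)
    have hinj : Set.InjOn (fun d : Fin (n+1) →₀ ℕ => d - Finsupp.single i 1) A := by
      intro a ha b hb hab
      calc a = a - Finsupp.single i 1 + Finsupp.single i 1 :=
              (tsub_add_cancel_of_le (hle1 a ha)).symm
        _ = b - Finsupp.single i 1 + Finsupp.single i 1 :=
              congrArg (· + Finsupp.single i 1) hab
        _ = b := tsub_add_cancel_of_le (hle1 b hb)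
    have h2 : ∑ d ∈ A.image (fun d => d - Finsupp.single i 1), (d i + 1) = ∑ d ∈ A, d i := by
      rw [Finset.sum_image (fun a ha b hb h => hinj (Finset.mem_coe.mpr ha)
        (Finset.mem_coe.mpr hb) h)]
      apply Finset.sum_congr rfl
      intro d hd
      have hdi : d i ≠ 0 := (Finset.mem_filter.mp hd).2
      have : ((d - Finsupp.single i 1 : Fin (n+1) →₀ ℕ)) i = d i - 1 := by
        rw [Finsupp.tsub_apply, Finsupp.single_apply, if_pos rfl]
      rw [this]
      omega
    have hsub : A.image (fun d => d - Finsupp.single i 1) ⊆ Mset n G j := by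
      intro d' hd'
      obtain ⟨d, hd, rfl⟩ := Finset.mem_image.mp hd'
      obtain ⟨hdm, hdi⟩ := Finset.mem_filter.mp hd
      obtain ⟨hdeg, hP⟩ := mem_Mset.mp hdm
      refine mem_Mset.mpr ⟨?_, ?_⟩
      · have hd2 : (d - Finsupp.single i 1) + Finsupp.single i 1 = d :=
          tsub_add_cancel_of_le (hle1 d hd)
        rw [degree_eq_sum] at hdeg ⊢
        have : ∑ x, d x = (∑ x, ((d - Finsupp.single i 1 : Fin (n+1) →₀ ℕ)) x)
            + ∑ x, (Finsupp.single i 1 : Fin (n+1) →₀ ℕ) x := by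
          rw [← Finset.sum_add_distrib]
          apply Finset.sum_congr rfl
          intro x _
          rw [← Finsupp.add_apply, hd2]
        rw [sum_single_apply] at this
        omega
      · rintro ⟨s, hs, hle'⟩
        exact hP ⟨s, hs, hle'.trans tsub_le_self⟩
    calc ∑ d ∈ Mset n G (j+1), d i = ∑ d ∈ A, d i := h1
      _ = ∑ d ∈ A.image (fun d => d - Finsupp.single i 1), (d i + 1) := h2.symm
      _ ≤ ∑ d ∈ Mset n G j, (d i + 1) := Finset.sum_le_sum_of_subset hsub
  calc (j + 1) * (Mset n G (j+1)).card = ∑ _d ∈ Mset n G (j+1), (j+1) := by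
        rw [Finset.sum_const, smul_eq_mul, mul_comm]
    _ = ∑ d ∈ Mset n G (j+1), ∑ i, d i := by
        apply Finset.sum_congr rfl
        intro d hd
        rw [← degree_eq_sum, (mem_Mset.mp hd).1]
    _ = ∑ i : Fin (n+1), ∑ d ∈ Mset n G (j+1), d i := Finset.sum_comm
    _ ≤ ∑ i : Fin (n+1), ∑ d ∈ Mset n G j, (d i + 1) :=
        Finset.sum_le_sum (fun i _ => key i)
    _ = ∑ d ∈ Mset n G j, ∑ i : Fin (n+1), (d i + 1) := Finset.sum_comm
    _ = ∑ d ∈ Mset n G j, (n + j + 1) := by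
        apply Finset.sum_congr rfl
        intro d hd
        rw [Finset.sum_add_distrib, Finset.sum_const, ← degree_eq_sum, (mem_Mset.mp hd).1]
        simp
        omega
    _ = (n + j + 1) * (Mset n G j).card := by
        rw [Finset.sum_const, smul_eq_mul, mul_comm]

end MacaulayAux

/-- For every monomial ideal `I` in `S = k[x_0,...,x_n]` and every `j ≥ 0`, the Hilbert
function of `S/I` satisfies `(n+j+1)·h_{S/I}(j) ≥ (j+1)·h_{S/I}(j+1)`, where the Hilbert
function is the dimension over `k` of the degree-`j` graded piece of `S/I`. -/
theorem macaulay_linear_inequality_for_monomial_ideals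
    (k : Type) [Field k] (n : ℕ) (I : Ideal (MvPolynomial (Fin (n + 1)) k))
    (hI : ∃ G : Set (Fin (n + 1) →₀ ℕ),
      I = Ideal.span ((fun d => (MvPolynomial.monomial d (1 : k))) '' G))
    (j : ℕ) :
    (j + 1) * Module.finrank k
        ((MvPolynomial.homogeneousSubmodule (Fin (n + 1)) k (j + 1)).map
          (Ideal.Quotient.mkₐ k I).toLinearMap)
      ≤ (n + j + 1) * Module.finrank k
        ((MvPolynomial.homogeneousSubmodule (Fin (n + 1)) k j).map
          (Ideal.Quotient.mkₐ k I).toLinearMap) := by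
  obtain ⟨G, rfl⟩ := hI
  rw [MacaulayAux.rank_eq G (j+1), MacaulayAux.rank_eq G j]
  exact MacaulayAux.card_ineq G j
end

section
/- For 0 ≤ ℓ ≤ n+1 and i ≥ 1, the Hilbert series of M = S/⟨x_0,...,x_{ℓ-1}⟩^i, where S = k[x_0,...,x_n], equals (1-t)^{ℓ-1-n} · Σ_{k=0}^{i-1} C(ℓ-1+k, k) t^k. -/
noncomputable section HilbAux
open MvPolynomial

variable {k : Type} [Field k] {n : ℕ} (ℓ : ℕ)

def Fdeg (ℓ : ℕ) (d : Fin (n+1) →₀ ℕ) : ℕ :=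
  ∑ x ∈ Finset.univ.filter (fun x : Fin (n+1) => (x:ℕ) < ℓ), d x

lemma Fdeg_add (a b : Fin (n+1) →₀ ℕ) : Fdeg ℓ (a + b) = Fdeg ℓ a + Fdeg ℓ b := by
  simp [Fdeg, Finset.sum_add_distrib]

def Iid (k : Type) [Field k] (n ℓ : ℕ) : Ideal (MvPolynomial (Fin (n+1)) k) :=
  Ideal.span ((MvPolynomial.X : Fin (n + 1) → MvPolynomial (Fin (n + 1)) k) ''
      {x : Fin (n + 1) | (x : ℕ) < ℓ})

lemma Fdeg_single {x : Fin (n+1)} (hx : (x:ℕ) < ℓ) :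
    Fdeg ℓ (Finsupp.single x 1) = 1 := by
  rw [Fdeg, Finset.sum_eq_single x]
  · simp
  · intro b _ hb; exact Finsupp.single_eq_of_ne' (Ne.symm hb)
  · intro h; exact absurd (Finset.mem_filter.mpr ⟨Finset.mem_univ x, hx⟩) h

lemma monomial_mem_pow {s : ℕ} (c : k) :
    ∀ d : Fin (n+1) →₀ ℕ, s ≤ Fdeg ℓ d → monomial d c ∈ (Iid k n ℓ) ^ s := by
  induction s with
  | zero => intro d _; simp
  | succ s ih =>
    intro d hd
    have hpos : 0 < Fdeg ℓ d := lt_of_lt_of_le (Nat.succ_pos s) hd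
    have : ∃ x ∈ Finset.univ.filter (fun x : Fin (n+1) => (x:ℕ) < ℓ), d x ≠ 0 := by
      by_contra hc
      push_neg at hc
      have : Fdeg ℓ d = 0 := Finset.sum_eq_zero hc
      omega
    obtain ⟨x, hxmem, hx0⟩ := this
    have hxℓ : (x:ℕ) < ℓ := (Finset.mem_filter.mp hxmem).2
    have hle : Finsupp.single x 1 ≤ d := by
      rw [Finsupp.single_le_iff]; omega
    set d' := d - Finsupp.single x 1 with hd'
    have hsum : Finsupp.single x 1 + d' = d := add_tsub_cancel_of_le hle
    have hFd : Fdeg ℓ d = 1 + Fdeg ℓ d' := by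
      conv_lhs => rw [← hsum]
      rw [Fdeg_add, Fdeg_single ℓ hxℓ]
    have hd' : s ≤ Fdeg ℓ d' := by omega
    have : monomial d c = X x * monomial d' c := by
      rw [X, monomial_mul, hsum, one_mul]
    rw [this, pow_succ']
    exact Ideal.mul_mem_mul (Ideal.subset_span ⟨x, hxℓ, rfl⟩) (ih d' hd')

def Jid (k : Type) [Field k] (n ℓ s : ℕ) : Ideal (MvPolynomial (Fin (n+1)) k) where
  carrier := {f | ∀ d ∈ f.support, s ≤ Fdeg ℓ d}
  zero_mem' := by simp
  add_mem' := by
    intro a b ha hb d hd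
    rcases Finset.mem_union.mp (Finsupp.support_add hd) with h | h
    · exact ha d h
    · exact hb d h
  smul_mem' := by
    intro c f hf d hd
    rw [smul_eq_mul] at hd
    rw [MvPolynomial.mem_support_iff, coeff_mul] at hd
    obtain ⟨⟨u, v⟩, huv, hne⟩ := Finset.exists_ne_zero_of_sum_ne_zero hd
    have hv : v ∈ f.support := by
      rw [MvPolynomial.mem_support_iff]
      intro h0; rw [h0, mul_zero] at hne; exact hne rfl
    have : d = u + v := (Finset.HasAntidiagonal.mem_antidiagonal.mp huv).symm
    rw [this]
    calc s ≤ Fdeg ℓ v := hf v hv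
    _ ≤ Fdeg ℓ u + Fdeg ℓ v := Nat.le_add_left _ _
    _ = Fdeg ℓ (u + v) := (Fdeg_add ℓ u v).symm

lemma mul_mem_Jid {s t : ℕ} {f g : MvPolynomial (Fin (n+1)) k}
    (hf : f ∈ Jid k n ℓ s) (hg : g ∈ Jid k n ℓ t) : f * g ∈ Jid k n ℓ (s + t) := by
  intro d hd
  rw [MvPolynomial.mem_support_iff, coeff_mul] at hd
  obtain ⟨⟨u, v⟩, huv, hne⟩ := Finset.exists_ne_zero_of_sum_ne_zero hd
  have hu : u ∈ f.support := by
    rw [MvPolynomial.mem_support_iff]; intro h0; rw [h0, zero_mul] at hne; exact hne rfl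
  have hv : v ∈ g.support := by
    rw [MvPolynomial.mem_support_iff]; intro h0; rw [h0, mul_zero] at hne; exact hne rfl
  have : d = u + v := (Finset.HasAntidiagonal.mem_antidiagonal.mp huv).symm
  rw [this, Fdeg_add]
  exact add_le_add (hf u hu) (hg v hv)

lemma Iid_le_Jid_one : Iid k n ℓ ≤ Jid k n ℓ 1 := by
  rw [Iid, Ideal.span_le]
  rintro _ ⟨x, hx, rfl⟩ d hd
  rw [support_X] at hd
  rw [Finset.mem_singleton.mp hd, Fdeg_single ℓ hx]

lemma pow_eq_Jid (s : ℕ) : (Iid k n ℓ) ^ s = Jid k n ℓ s := by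
  apply le_antisymm
  · induction s with
    | zero =>
      rw [pow_zero, Ideal.one_eq_top]
      intro f _ d _
      exact Nat.zero_le _
    | succ s ih =>
      rw [pow_succ]
      refine Ideal.mul_le.mpr fun f hf g hg => ?_
      exact mul_mem_Jid ℓ (ih hf) (Iid_le_Jid_one ℓ hg)
  · intro f hf
    rw [f.as_sum]
    exact Ideal.sum_mem _ fun d hd => monomial_mem_pow ℓ _ d (hf d hd)


lemma AMsupp_union {σ : Type} (s t : Set σ) :
    AddMonoidAlgebra.supported k k (s ∪ t) =
      AddMonoidAlgebra.supported k k s ⊔ AddMonoidAlgebra.supported k k t := by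
  simp only [AddMonoidAlgebra.supported_eq_map, Finsupp.supported_union, Submodule.map_sup]

lemma AMsupp_inter {σ : Type} (s t : Set σ) :
    AddMonoidAlgebra.supported k k (s ∩ t) =
      AddMonoidAlgebra.supported k k s ⊓ AddMonoidAlgebra.supported k k t := by
  ext x
  simp only [Submodule.mem_inf, AddMonoidAlgebra.mem_supported, Set.subset_inter_iff]

lemma AMsupp_empty {σ : Type} :
    AddMonoidAlgebra.supported k k (∅ : Set σ) = ⊥ := by
  simp only [AddMonoidAlgebra.supported_eq_map, Finsupp.supported_empty, Submodule.map_bot]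

lemma restrictScalars_Jid (s : ℕ) :
    Submodule.restrictScalars k (Jid k n ℓ s) =
      AddMonoidAlgebra.supported k k {d : Fin (n+1) →₀ ℕ | s ≤ Fdeg ℓ d} := by
  ext f
  rw [Submodule.restrictScalars_mem, AddMonoidAlgebra.mem_supported]
  exact ⟨fun h d hd => h d hd, fun h d hd => h hd⟩

lemma finrank_image_eq_card (i j : ℕ) :
    Module.finrank k (((homogeneousSubmodule (Fin (n+1)) k j).map
      (Ideal.Quotient.mkₐ k ((Iid k n ℓ)^i)).toLinearMap)) =
    Nat.card {d : Fin (n+1) →₀ ℕ // d.degree = j ∧ Fdeg ℓ d < i} := by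
  classical
  set π := (Ideal.Quotient.mkₐ k ((Iid k n ℓ)^i)).toLinearMap with hπ
  set A : Set (Fin (n+1) →₀ ℕ) := {d | d.degree = j ∧ Fdeg ℓ d < i} with hA
  set C : Set (Fin (n+1) →₀ ℕ) := {d | i ≤ Fdeg ℓ d} with hC
  have hker : LinearMap.ker π = AddMonoidAlgebra.supported k k C := by
    rw [hπ]
    ext f
    rw [LinearMap.mem_ker, ← restrictScalars_Jid, Submodule.restrictScalars_mem, ← pow_eq_Jid]
    show (Ideal.Quotient.mkₐ k ((Iid k n ℓ)^i)) f = 0 ↔ _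
    rw [Ideal.Quotient.mkₐ_eq_mk, Ideal.Quotient.eq_zero_iff_mem]
  have hsplit : {d : Fin (n+1) →₀ ℕ | d.degree = j} = A ∪ ({d | d.degree = j} ∩ C) := by
    ext d
    simp only [hA, hC, Set.mem_setOf_eq, Set.mem_union, Set.mem_inter_iff]
    omega
  have hmap : (homogeneousSubmodule (Fin (n+1)) k j).map π =
      (AddMonoidAlgebra.supported k k A).map π := by
    rw [homogeneousSubmodule_eq_finsupp_supported, hsplit, AMsupp_union,
      Submodule.map_sup]
    have hle : AddMonoidAlgebra.supported k k ({d : Fin (n+1) →₀ ℕ | d.degree = j} ∩ C) ≤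
        LinearMap.ker π := by
      rw [hker]; exact AddMonoidAlgebra.supported_mono Set.inter_subset_right
    have h0 : (AddMonoidAlgebra.supported k k ({d : Fin (n+1) →₀ ℕ | d.degree = j} ∩ C)).map π = ⊥ :=
      le_bot_iff.mp (Submodule.map_le_iff_le_comap.mpr hle)
    rw [h0, sup_bot_eq]
  rw [hmap]
  have hAC : A ∩ C = ∅ := by
    ext d; simp only [hA, hC, Set.mem_setOf_eq, Set.mem_inter_iff, Set.mem_empty_iff_false,
      iff_false, not_and]
    rintro ⟨-, h⟩; omega
  have hdisj : AddMonoidAlgebra.supported k k A ⊓ LinearMap.ker π = ⊥ := by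
    rw [hker, ← AMsupp_inter, hAC, AMsupp_empty]
  set g := π ∘ₗ (AddMonoidAlgebra.supported k k A).subtype with hg
  have hrange : LinearMap.range g = (AddMonoidAlgebra.supported k k A).map π := by
    rw [hg, LinearMap.range_comp, Submodule.range_subtype]
  have hinj : Function.Injective g := by
    rw [← LinearMap.ker_eq_bot, Submodule.eq_bot_iff]
    intro x hx
    have hx' : π x.1 = 0 := hx
    have : x.1 ∈ AddMonoidAlgebra.supported k k A ⊓ LinearMap.ker π := ⟨x.2, hx'⟩
    rw [hdisj, Submodule.mem_bot] at this
    exact Subtype.ext this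
  rw [← hrange, LinearMap.finrank_range_of_inj hinj]
  have hfin : A.Finite := by
    apply (Finsupp.finite_of_degree_le j).subset
    intro d hd
    exact le_of_eq hd.1
  haveI : Fintype A := hfin.fintype
  haveI : Fintype {d : Fin (n+1) →₀ ℕ // d.degree = j ∧ Fdeg ℓ d < i} := hfin.fintype
  have hcard : Module.finrank k (AddMonoidAlgebra.supported k k A) = Fintype.card A :=
    Module.finrank_eq_card_basis (MvPolynomial.basisRestrictSupport k A)
  rw [hcard, Nat.card_eq_fintype_card]
  exact Fintype.card_congr (Equiv.subtypeEquivRight fun d => Iff.rfl)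


lemma degree_eq_sum_univ {α : Type*} [Fintype α] (d : α →₀ ℕ) :
    Finsupp.degree d = ∑ x, d x :=
  Finset.sum_subset (Finset.subset_univ _)
    (fun x _ hx => by simpa using Finsupp.notMem_support_iff.mp hx)

lemma card_degree_eq (α : Type*) [Fintype α] [DecidableEq α] (m : ℕ) :
    Nat.card {d : α →₀ ℕ // Finsupp.degree d = m} = (Fintype.card α + m - 1).choose m := by
  have e : {d : α →₀ ℕ // Finsupp.degree d = m} ≃ Sym α m :=
    (Equiv.subtypeEquivRight fun d => by
       simp [Finsupp.degree, Finsupp.sum]; exact Iff.rfl).trans (Sym.equivNatSum α m).symm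
  rw [Nat.card_congr e, Nat.card_eq_fintype_card, Sym.card_sym_eq_choose]

/-- splitting a finsupp on `Fin (n+1)` along the predicate `x < ℓ` -/
def Epw : (({x : Fin (n+1) // (x:ℕ) < ℓ} →₀ ℕ) × ({x : Fin (n+1) // ¬ (x:ℕ) < ℓ} →₀ ℕ)) ≃
    (Fin (n+1) →₀ ℕ) where
  toFun ab := ab.1.piecewise ab.2
  invFun d := (d.subtypeDomain _, d.subtypeDomain _)
  left_inv := fun ab => by simp
  right_inv := fun d => by
    ext a
    by_cases h : (a:ℕ) < ℓ
    · exact dif_pos h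
    · exact dif_neg h

lemma degree_subtypeDomain_p (d : Fin (n+1) →₀ ℕ) :
    Finsupp.degree (d.subtypeDomain (fun x : Fin (n+1) => (x:ℕ) < ℓ)) = Fdeg ℓ d := by
  rw [degree_eq_sum_univ, Fdeg,
    Finset.sum_subtype (p := fun x : Fin (n+1) => (x:ℕ) < ℓ)
      (Finset.univ.filter (fun x : Fin (n+1) => (x:ℕ) < ℓ))
      (fun x => by simp) (fun x : Fin (n+1) => d x)]
  rfl

lemma degree_subtypeDomain_np (d : Fin (n+1) →₀ ℕ) :
    Finsupp.degree (d.subtypeDomain (fun x : Fin (n+1) => ¬ (x:ℕ) < ℓ)) =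
      Finsupp.degree d - Fdeg ℓ d := by
  have h1 : Finsupp.degree (d.subtypeDomain (fun x : Fin (n+1) => ¬ (x:ℕ) < ℓ)) =
      ∑ x ∈ Finset.univ.filter (fun x : Fin (n+1) => ¬ (x:ℕ) < ℓ), d x := by
    rw [degree_eq_sum_univ,
      Finset.sum_subtype (p := fun x : Fin (n+1) => ¬ (x:ℕ) < ℓ)
        (Finset.univ.filter (fun x : Fin (n+1) => ¬ (x:ℕ) < ℓ))
        (fun x => by simp) (fun x : Fin (n+1) => d x)]
    rfl
  have h2 : Finsupp.degree d = Fdeg ℓ d +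
      ∑ x ∈ Finset.univ.filter (fun x : Fin (n+1) => ¬ (x:ℕ) < ℓ), d x := by
    rw [degree_eq_sum_univ, Fdeg, Finset.sum_filter_add_sum_filter_not]
  omega

lemma degree_split (d : Fin (n+1) →₀ ℕ) :
    Fdeg ℓ d ≤ Finsupp.degree d ∧
    Finsupp.degree d = Fdeg ℓ d +
      Finsupp.degree (d.subtypeDomain (fun x : Fin (n+1) => ¬ (x:ℕ) < ℓ)) := by
  have h1 : Finsupp.degree (d.subtypeDomain (fun x : Fin (n+1) => ¬ (x:ℕ) < ℓ)) =
      ∑ x ∈ Finset.univ.filter (fun x : Fin (n+1) => ¬ (x:ℕ) < ℓ), d x := by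
    rw [degree_eq_sum_univ,
      Finset.sum_subtype (p := fun x : Fin (n+1) => ¬ (x:ℕ) < ℓ)
        (Finset.univ.filter (fun x : Fin (n+1) => ¬ (x:ℕ) < ℓ))
        (fun x => by simp) (fun x : Fin (n+1) => d x)]
    rfl
  have h2 : Finsupp.degree d = Fdeg ℓ d +
      ∑ x ∈ Finset.univ.filter (fun x : Fin (n+1) => ¬ (x:ℕ) < ℓ), d x := by
    rw [degree_eq_sum_univ, Fdeg, Finset.sum_filter_add_sum_filter_not]
  omega

lemma card_L (hℓ : ℓ ≤ n + 1) : Fintype.card {x : Fin (n+1) // (x:ℕ) < ℓ} = ℓ := by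
  rw [Fintype.card_congr
    (⟨fun x => ⟨x.1.1, x.2⟩, fun m => ⟨⟨m.1, lt_of_lt_of_le m.2 hℓ⟩, m.2⟩,
      fun x => rfl, fun m => rfl⟩ : {x : Fin (n+1) // (x:ℕ) < ℓ} ≃ Fin ℓ)]
  exact Fintype.card_fin ℓ

lemma card_R (hℓ : ℓ ≤ n + 1) :
    Fintype.card {x : Fin (n+1) // ¬ (x:ℕ) < ℓ} = n + 1 - ℓ := by
  rw [Fintype.card_subtype_compl, Fintype.card_fin, card_L ℓ hℓ]

lemma card_fiber (hℓ : ℓ ≤ n + 1) (j m : ℕ) :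
    Nat.card {d : Fin (n+1) →₀ ℕ // Finsupp.degree d = j ∧ Fdeg ℓ d = m} =
    if m ≤ j then (ℓ + m - 1).choose m * ((n+1-ℓ) + (j-m) - 1).choose (j-m) else 0 := by
  by_cases hm : m ≤ j
  · rw [if_pos hm]
    have e : {d : Fin (n+1) →₀ ℕ // Finsupp.degree d = j ∧ Fdeg ℓ d = m} ≃
        ({a : {x : Fin (n+1) // (x:ℕ) < ℓ} →₀ ℕ // Finsupp.degree a = m} ×
         {b : {x : Fin (n+1) // ¬ (x:ℕ) < ℓ} →₀ ℕ // Finsupp.degree b = j - m}) := by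
      refine (Equiv.subtypeEquiv (Epw ℓ).symm fun d => ?_).trans
        (Equiv.subtypeProdEquivProd)
      obtain ⟨hle, hsum⟩ := degree_split ℓ d
      show _ ↔ Finsupp.degree (d.subtypeDomain _) = m ∧ Finsupp.degree (d.subtypeDomain _) = j - m
      rw [degree_subtypeDomain_p]
      omega
    rw [Nat.card_congr e, Nat.card_prod, card_degree_eq, card_degree_eq,
      card_L ℓ hℓ, card_R ℓ hℓ]
  · rw [if_neg hm]
    have : IsEmpty {d : Fin (n+1) →₀ ℕ // Finsupp.degree d = j ∧ Fdeg ℓ d = m} := by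
      refine ⟨fun ⟨d, hd⟩ => ?_⟩
      have := (degree_split ℓ d).1
      omega
    exact Nat.card_of_isEmpty


lemma card_A_eq_sum (i j : ℕ) :
    Nat.card {d : Fin (n+1) →₀ ℕ // Finsupp.degree d = j ∧ Fdeg ℓ d < i} =
      ∑ m ∈ Finset.range i,
        Nat.card {d : Fin (n+1) →₀ ℕ // Finsupp.degree d = j ∧ Fdeg ℓ d = m} := by
  classical
  have hfin : {d : Fin (n+1) →₀ ℕ | Finsupp.degree d = j ∧ Fdeg ℓ d < i}.Finite :=
    (Finsupp.finite_of_degree_le j).subset fun d hd => le_of_eq hd.1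
  have hfinm : ∀ m : ℕ, {d : Fin (n+1) →₀ ℕ | Finsupp.degree d = j ∧ Fdeg ℓ d = m}.Finite :=
    fun m => (Finsupp.finite_of_degree_le j).subset fun d hd => le_of_eq hd.1
  haveI : Fintype {d : Fin (n+1) →₀ ℕ // Finsupp.degree d = j ∧ Fdeg ℓ d < i} := hfin.fintype
  haveI : ∀ m : ℕ, Fintype {d : Fin (n+1) →₀ ℕ // Finsupp.degree d = j ∧ Fdeg ℓ d = m} :=
    fun m => (hfinm m).fintype
  have e : {d : Fin (n+1) →₀ ℕ // Finsupp.degree d = j ∧ Fdeg ℓ d < i} ≃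
      Σ m : Fin i, {d : Fin (n+1) →₀ ℕ // Finsupp.degree d = j ∧ Fdeg ℓ d = (m:ℕ)} :=
    ⟨fun d => ⟨⟨Fdeg ℓ d.1, d.2.2⟩, ⟨d.1, ⟨d.2.1, rfl⟩⟩⟩,
     fun x => ⟨x.2.1, ⟨x.2.2.1, by rw [x.2.2.2]; exact x.1.2⟩⟩,
     fun d => rfl,
     by
      rintro ⟨⟨m, hm⟩, ⟨d, hd, hF⟩⟩
      exact Sigma.subtype_ext (Fin.ext hF) rfl⟩
  rw [Nat.card_congr e, Nat.card_eq_fintype_card, Fintype.card_sigma,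
    ← Fin.sum_univ_eq_sum_range]
  exact Finset.sum_congr rfl fun m _ => (Nat.card_eq_fintype_card).symm

lemma card_A_formula (hℓ : ℓ ≤ n + 1) (i j : ℕ) :
    Nat.card {d : Fin (n+1) →₀ ℕ // Finsupp.degree d = j ∧ Fdeg ℓ d < i} =
      ∑ m ∈ Finset.range i,
        if m ≤ j then (ℓ + m - 1).choose m * ((n+1-ℓ) + (j-m) - 1).choose (j-m) else 0 := by
  rw [card_A_eq_sum]
  exact Finset.sum_congr rfl fun m _ => card_fiber ℓ hℓ j m


open PowerSeries

end HilbAux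

noncomputable section PSAux
open PowerSeries

lemma one_sub_X_inv_pow (e : ℕ) :
    ((1 - PowerSeries.X : PowerSeries ℚ)⁻¹) ^ e =
      PowerSeries.mk fun d => ((e + d - 1).choose d : ℚ) := by
  have hc : constantCoeff (1 - X : ℚ⟦X⟧) ≠ 0 := by simp
  have h1 : ((1 - X : ℚ⟦X⟧)⁻¹) ^ e * (1 - X) ^ e = 1 := by
    rw [← mul_pow, PowerSeries.inv_mul_cancel _ hc, one_pow]
  have h2 : (invOneSubPow ℚ e).val * (1 - X) ^ e = 1 := by
    have := (invOneSubPow ℚ e).val_inv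
    rwa [invOneSubPow_inv_eq_one_sub_pow] at this
  have key : ((1 - X : ℚ⟦X⟧)⁻¹) ^ e = (invOneSubPow ℚ e).val := by
    calc ((1 - X : ℚ⟦X⟧)⁻¹) ^ e = ((1 - X : ℚ⟦X⟧)⁻¹) ^ e * ((invOneSubPow ℚ e).val * (1 - X) ^ e) := by
          rw [h2, mul_one]
      _ = (invOneSubPow ℚ e).val * (((1 - X : ℚ⟦X⟧)⁻¹) ^ e * (1 - X) ^ e) := by ring
      _ = (invOneSubPow ℚ e).val := by rw [h1, mul_one]
  rw [key]
  rcases Nat.eq_zero_or_pos e with he | he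
  · subst he
    rw [invOneSubPow_zero]
    ext d
    rw [coeff_mk, Units.val_one, coeff_one]
    rcases Nat.eq_zero_or_pos d with hd | hd
    · subst hd; simp
    · rw [if_neg (by omega)]
      have h0 : (0 + d - 1).choose d = 0 := Nat.choose_eq_zero_of_lt (by omega)
      rw [h0, Nat.cast_zero]
  · rw [invOneSubPow_val_eq_mk_sub_one_add_choose_of_pos _ _ he]
    ext d
    rw [coeff_mk, coeff_mk]
    norm_cast
    rw [show e + d - 1 = e - 1 + d by omega, Nat.choose_symm_add]

lemma ring_choose_eq (ℓ m : ℕ) :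
    Ring.choose ((ℓ:ℚ) - 1 + m) m = ((ℓ + m - 1).choose m : ℚ) := by
  rcases Nat.eq_zero_or_pos (ℓ + m) with h | h
  · have hℓ : ℓ = 0 := by omega
    have hm : m = 0 := by omega
    subst hℓ hm
    simp [Ring.choose_zero_right]
  · have hcast : (ℓ:ℚ) - 1 + m = ((ℓ + m - 1 : ℕ) : ℚ) := by
      have : ((ℓ + m - 1 : ℕ) : ℚ) = (ℓ : ℚ) + m - 1 := by
        push_cast [Nat.cast_sub h]
        ring
      rw [this]; ring
    rw [hcast, Ring.choose_natCast]

lemma coeff_RHS (e i j : ℕ) (c : ℕ → ℚ) :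
    PowerSeries.coeff j (((1 - PowerSeries.X : PowerSeries ℚ)⁻¹) ^ e *
      ∑ m ∈ Finset.range i, PowerSeries.C (c m) * PowerSeries.X ^ m) =
    ∑ m ∈ Finset.range i, c m * (if m ≤ j then (((e + (j-m) - 1).choose (j-m) : ℕ) : ℚ) else 0) := by
  rw [one_sub_X_inv_pow, Finset.mul_sum, map_sum]
  refine Finset.sum_congr rfl fun m _ => ?_
  rw [show (PowerSeries.mk fun d => ((e + d - 1).choose d : ℚ)) * (PowerSeries.C (c m) * PowerSeries.X ^ m)
      = PowerSeries.C (c m) * ((PowerSeries.mk fun d => ((e + d - 1).choose d : ℚ)) * PowerSeries.X ^ m) by ring,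
    coeff_C_mul, coeff_mul_X_pow']
  congr 1
  split
  · rw [coeff_mk]
  · rfl



end PSAux


/-- For `0 ≤ ℓ ≤ n+1` and `i ≥ 1`, the Hilbert series of `M = S/⟨x_0,...,x_{ℓ-1}⟩^i`,
where `S = k[x_0,...,x_n]`, equals `(1-t)^{ℓ-1-n} · Σ_{k=0}^{i-1} C(ℓ-1+k, k) t^k`,
written here as `((1-t)⁻¹)^{n+1-ℓ} · Σ_{k=0}^{i-1} C(ℓ-1+k, k) t^k` in `ℚ⟦t⟧`
(using the generalized binomial coefficient `C(ℓ-1+k, k)`). -/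
theorem hilbert_series_of_power_of_linear_ideal
    (k : Type) [Field k] (n ℓ i : ℕ) (hℓ : ℓ ≤ n + 1) (hi : 1 ≤ i) :
    (PowerSeries.mk fun j => (Module.finrank k
        ((MvPolynomial.homogeneousSubmodule (Fin (n + 1)) k j).map
          (Ideal.Quotient.mkₐ k
            ((Ideal.span ((MvPolynomial.X : Fin (n + 1) → MvPolynomial (Fin (n + 1)) k) ''
              {x : Fin (n + 1) | (x : ℕ) < ℓ})) ^ i)).toLinearMap) : ℚ))
      = ((1 - PowerSeries.X : PowerSeries ℚ)⁻¹) ^ (n + 1 - ℓ)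
          * ∑ m ∈ Finset.range i,
              PowerSeries.C (R := ℚ) (Ring.choose ((ℓ : ℚ) - 1 + m) m) * PowerSeries.X ^ m := by
  ext j
  rw [PowerSeries.coeff_mk, coeff_RHS (n+1-ℓ) i j (fun m => Ring.choose ((ℓ : ℚ) - 1 + m) m)]
  have hfr : Module.finrank k (((MvPolynomial.homogeneousSubmodule (Fin (n+1)) k j).map
      (Ideal.Quotient.mkₐ k ((Iid k n ℓ)^i)).toLinearMap)) =
      ∑ m ∈ Finset.range i,
        if m ≤ j then (ℓ + m - 1).choose m * ((n+1-ℓ) + (j-m) - 1).choose (j-m) else 0 := by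
    rw [finrank_image_eq_card, card_A_formula ℓ hℓ i j]
  rw [show (Ideal.span ((MvPolynomial.X : Fin (n + 1) → MvPolynomial (Fin (n + 1)) k) ''
        {x : Fin (n + 1) | (x : ℕ) < ℓ})) = Iid k n ℓ from rfl, hfr, Nat.cast_sum]
  refine Finset.sum_congr rfl fun m hm => ?_
  rw [ring_choose_eq]
  split_ifs with h
  · push_cast
    ring
  · simp
end

section
/- Applying the operator T = (n+1)·id - (1-t)·d/dt to the power series (1-t)^{ℓ-1-n} · Σ_{k=0}^{i-1} C(ℓ-1+k,k) t^k yields i·C(ℓ-1+i, i) · t^{i-1} · (1-t)^{ℓ-1-n}, for 0 ≤ ℓ ≤ n+1 and i ≥ 1. -/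
open Polynomial in
private lemma key_choose (r : ℚ) (k : ℕ) :
    ((k:ℚ)+1) * Ring.choose (r+1) (k+1) = (r+1) * Ring.choose r k := by
  have h1 := Ring.descPochhammer_eq_factorial_smul_choose (r+1) (k+1)
  have h2 := Ring.descPochhammer_eq_factorial_smul_choose r k
  have h3 : (descPochhammer ℤ (k+1)).smeval (r+1) = (r+1) * (descPochhammer ℤ k).smeval r := by
    rw [descPochhammer_succ_left]
    simp [smeval_comp, smeval_X_mul, smeval_sub, smeval_X, smeval_one]
  rw [h1, h2] at h3
  have hf : ((k+1).factorial : ℚ) = ((k:ℚ)+1) * (k.factorial : ℚ) := by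
    push_cast [Nat.factorial_succ]; ring
  have hk : (k.factorial : ℚ) ≠ 0 := by positivity
  rw [nsmul_eq_mul, nsmul_eq_mul, hf] at h3
  exact mul_left_cancel₀ hk (by linear_combination h3)

private lemma term_identity (ℓ : ℕ) (D : Derivation ℚ (RatFunc ℚ) (RatFunc ℚ))
    (hD : D RatFunc.X = 1) :
    ∀ m : ℕ, (ℓ:ℚ) • (RatFunc.C (Ring.choose ((ℓ:ℚ)-1+m) m) * RatFunc.X ^ m)
        - (1 - RatFunc.X) * D (RatFunc.C (Ring.choose ((ℓ:ℚ)-1+m) m) * RatFunc.X ^ m)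
      = ((m+1:ℕ):ℚ) • (RatFunc.C (Ring.choose ((ℓ:ℚ)-1+(m+1:ℕ)) (m+1)) * RatFunc.X ^ (m+1-1))
        - (m:ℚ) • (RatFunc.C (Ring.choose ((ℓ:ℚ)-1+m) m) * RatFunc.X ^ (m-1)) := by
  have hDC : ∀ a : ℚ, D (RatFunc.C a) = 0 := fun a => by
    have := Derivation.map_algebraMap D a
    rw [eq_ratCast] at this; rw [eq_ratCast RatFunc.C]; exact this
  intro m
  rw [Derivation.leibniz, hDC, smul_zero, add_zero, Derivation.leibniz_pow, hD]
  have hkey := key_choose ((ℓ:ℚ) - 1 + m) m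
  have harg : ((ℓ:ℚ) - 1 + m + 1) = ((ℓ:ℚ) - 1 + ((m+1:ℕ):ℚ)) := by push_cast; ring
  rw [harg] at hkey
  have hkeyC := congrArg RatFunc.C hkey
  simp only [map_mul, map_add, map_sub, map_one, map_natCast] at hkeyC
  match m with
  | 0 =>
    simp only [Nat.cast_zero, zero_smul, sub_zero, pow_zero, Nat.cast_one, one_smul,
      Nat.zero_add, zero_add, Nat.sub_self, smul_eq_mul, mul_one, mul_zero, zero_mul,
      RatFunc.smul_eq_C_mul, map_natCast, zero_smul] at hkeyC ⊢
    ring_nf at hkeyC ⊢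
    simp
  | (j+1) =>
    simp only [Nat.add_sub_cancel, RatFunc.smul_eq_C_mul, smul_eq_mul, nsmul_eq_mul,
      map_natCast, mul_one] at hkeyC ⊢
    rw [pow_succ']
    push_cast at hkeyC ⊢
    ring_nf at hkeyC ⊢
    linear_combination (-RatFunc.X ^ (j+1)) * hkeyC

private lemma sum_identity (ℓ i : ℕ)
    (D : Derivation ℚ (RatFunc ℚ) (RatFunc ℚ)) (hD : D RatFunc.X = 1) :
    (ℓ:ℚ) • (∑ m ∈ Finset.range i, RatFunc.C (Ring.choose ((ℓ : ℚ) - 1 + m) m) * RatFunc.X ^ m)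
      - (1 - RatFunc.X) * D (∑ m ∈ Finset.range i,
          RatFunc.C (Ring.choose ((ℓ : ℚ) - 1 + m) m) * RatFunc.X ^ m)
      = (i:ℚ) • (RatFunc.C (Ring.choose ((ℓ : ℚ) - 1 + i) i) * RatFunc.X ^ (i-1)) := by
  set f : ℕ → RatFunc ℚ :=
    fun k => (k:ℚ) • (RatFunc.C (Ring.choose ((ℓ : ℚ) - 1 + k) k) * RatFunc.X ^ (k-1)) with hf
  calc (ℓ:ℚ) • (∑ m ∈ Finset.range i, RatFunc.C (Ring.choose ((ℓ : ℚ) - 1 + m) m)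
          * RatFunc.X ^ m)
      - (1 - RatFunc.X) * D (∑ m ∈ Finset.range i,
          RatFunc.C (Ring.choose ((ℓ : ℚ) - 1 + m) m) * RatFunc.X ^ m)
      = ∑ m ∈ Finset.range i,
          ((ℓ:ℚ) • (RatFunc.C (Ring.choose ((ℓ : ℚ) - 1 + m) m) * RatFunc.X ^ m)
          - (1 - RatFunc.X) * D (RatFunc.C (Ring.choose ((ℓ : ℚ) - 1 + m) m)
              * RatFunc.X ^ m)) := by
        simp only [RatFunc.smul_eq_C_mul, map_sum, Finset.mul_sum, Finset.sum_sub_distrib]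
    _ = ∑ m ∈ Finset.range i, (f (m+1) - f m) :=
        Finset.sum_congr rfl fun m _ => term_identity ℓ D hD m
    _ = f i - f 0 := Finset.sum_range_sub f i
    _ = (i:ℚ) • (RatFunc.C (Ring.choose ((ℓ : ℚ) - 1 + i) i) * RatFunc.X ^ (i-1)) := by
        simp [hf]
        simp [RatFunc.smul_eq_C_mul]

/-- For `0 ≤ ℓ ≤ n+1` and `i ≥ 1`, applying the operator `T = (n+1)·id - (1-t)·d/dt`
(with `d/dt` the unique `ℚ`-derivation `D` of `ℚ(t)` satisfying `D t = 1`) to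
`(1-t)^{ℓ-1-n} · Σ_{k=0}^{i-1} C(ℓ-1+k,k) t^k` yields
`i·C(ℓ-1+i, i) · t^{i-1} · (1-t)^{ℓ-1-n}`. -/
theorem T_of_hilbert_series_of_power_of_linear_ideal
    (n ℓ i : ℕ) (hℓ : ℓ ≤ n + 1) (hi : 1 ≤ i)
    (D : Derivation ℚ (RatFunc ℚ) (RatFunc ℚ)) (hD : D RatFunc.X = 1)
    (F : RatFunc ℚ)
    (hF : F = (1 - RatFunc.X : RatFunc ℚ) ^ ((ℓ : ℤ) - 1 - n)
        * ∑ m ∈ Finset.range i, RatFunc.C (Ring.choose ((ℓ : ℚ) - 1 + m) m)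
            * RatFunc.X ^ m) :
    ((n : ℚ) + 1) • F - (1 - RatFunc.X) * D F
      = (i : ℚ) • (RatFunc.C (Ring.choose ((ℓ : ℚ) - 1 + i) i) * RatFunc.X ^ (i - 1)
          * (1 - RatFunc.X : RatFunc ℚ) ^ ((ℓ : ℤ) - 1 - n)) := by
  have h1X : (1 - RatFunc.X : RatFunc ℚ) ≠ 0 := by
    rw [sub_ne_zero]
    intro h
    have := congrArg (RatFunc.eval (RingHom.id ℚ) 0) h
    simp at this
  set z : ℤ := (ℓ : ℤ) - 1 - n with hz
  set S : RatFunc ℚ := ∑ m ∈ Finset.range i,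
    RatFunc.C (Ring.choose ((ℓ : ℚ) - 1 + m) m) * RatFunc.X ^ m with hS
  set u : RatFunc ℚ := (1 - RatFunc.X) ^ z with hu
  have hD1X : D (1 - RatFunc.X) = -1 := by
    rw [map_sub, hD, Derivation.map_one_eq_zero]; ring
  have hDu : (1 - RatFunc.X) * D u = ((z : RatFunc ℚ)) * (-u) := by
    rw [hu, Derivation.leibniz_zpow, hD1X, zpow_sub_one₀ h1X]
    simp only [zsmul_eq_mul, smul_eq_mul, mul_neg_one]
    field_simp
  have hmain := sum_identity ℓ i D hD
  have hsplit : D F = u * D S + S * D u := by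
    rw [hF, Derivation.leibniz]; simp [smul_eq_mul]
  have hcast : (z : RatFunc ℚ) = (ℓ : RatFunc ℚ) - 1 - (n : RatFunc ℚ) := by
    rw [hz]; push_cast; ring
  calc ((n : ℚ) + 1) • F - (1 - RatFunc.X) * D F
      = u * ((ℓ:ℚ) • S - (1 - RatFunc.X) * D S) := by
        rw [hsplit, hF]
        simp only [RatFunc.smul_eq_C_mul, map_add, map_sub, map_one, map_natCast]
        rw [hcast] at hDu
        linear_combination (-S) * hDu
    _ = u * ((i:ℚ) • (RatFunc.C (Ring.choose ((ℓ : ℚ) - 1 + i) i)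
          * RatFunc.X ^ (i-1))) := by rw [hS]; rw [hmain]
    _ = (i : ℚ) • (RatFunc.C (Ring.choose ((ℓ : ℚ) - 1 + i) i) * RatFunc.X ^ (i - 1)
          * (1 - RatFunc.X : RatFunc ℚ) ^ z) := by
        rw [RatFunc.smul_eq_C_mul, RatFunc.smul_eq_C_mul, ← hu]; ring
end

section
/- Any polynomial f ∈ ℚ[s] of degree r with r distinct negative integer roots and positive leading coefficient is a nonnegative ℚ-linear combination of the polynomials C(s+k, k) = (s+1)(s+2)···(s+k)/k! for 0 ≤ k ≤ r. -/
open Polynomial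

private lemma aux_binom (n : ℕ) : ∀ s : Finset ℤ, s.card = n → (∀ x ∈ s, 1 ≤ x) →
    ∃ e : ℕ → ℚ, (∀ k, 0 ≤ e k) ∧ (∀ k, n < k → e k = 0) ∧
      ∏ x ∈ s, (X + C (x : ℚ)) =
        ∑ k ∈ Finset.range (n + 1), C (e k) *
          ∏ t ∈ Finset.range k, (X + C ((t : ℚ) + 1)) := by
  induction n with
  | zero =>
    intro s hs _
    refine ⟨fun k => if k = 0 then 1 else 0, ?_, ?_, ?_⟩
    · intro k; dsimp only; split <;> norm_num
    · intro k hk; simp only [if_neg (by omega : k ≠ 0)]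
    · rw [Finset.card_eq_zero.mp hs]; simp
  | succ n ih =>
    intro s hs hone
    have hne : s.Nonempty := Finset.card_pos.mp (by omega)
    set m := s.max' hne with hm
    have hms : m ∈ s := s.max'_mem hne
    have h1m : 1 ≤ m := hone m hms
    have hcard : (s.erase m).card = n := by
      rw [Finset.card_erase_of_mem hms, hs]
      omega
    have hmn : (n : ℤ) + 1 ≤ m := by
      have hsub : s ⊆ Finset.Icc 1 m := by
        intro x hx
        exact Finset.mem_Icc.mpr ⟨hone x hx, s.le_max' x hx⟩
      have := Finset.card_le_card hsub
      rw [hs, Int.card_Icc] at this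
      omega
    obtain ⟨e, he0, hez, heq⟩ := ih (s.erase m) hcard (fun x hx => hone x (Finset.mem_of_mem_erase hx))
    refine ⟨fun k => (if k = 0 then 0 else e (k - 1)) + e k * ((m : ℚ) - k - 1), ?_, ?_, ?_⟩
    · intro k
      dsimp only
      have h1 : 0 ≤ (if k = 0 then (0:ℚ) else e (k - 1)) := by
        split
        · exact le_refl 0
        · exact he0 _
      have h2 : 0 ≤ e k * ((m : ℚ) - k - 1) := by
        rcases eq_or_ne (e k) 0 with h | h
        · simp [h]
        · have hk : k ≤ n := by by_contra hk; exact h (hez k (by omega))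
          have : (k : ℚ) + 1 ≤ (m : ℚ) := by
            have : (k : ℤ) + 1 ≤ m := by exact_mod_cast le_trans (by exact_mod_cast Int.add_le_add_right (Int.ofNat_le.mpr hk) 1) hmn
            exact_mod_cast this
          exact mul_nonneg (he0 k) (by linarith)
      linarith
    · intro k hk
      dsimp only
      have h1 : e (k - 1) = 0 := hez _ (by omega)
      have h2 : e k = 0 := hez _ (by omega)
      simp [h1, h2, if_neg (by omega : k ≠ 0)]
    · have hsplit : ∏ x ∈ s, (X + C (x : ℚ)) =
          (X + C (m : ℚ)) * ∏ x ∈ s.erase m, (X + C (x : ℚ)) :=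
        (Finset.mul_prod_erase s _ hms).symm
      rw [hsplit, heq, Finset.mul_sum]
      have hterm : ∀ k ∈ Finset.range (n + 1),
          (X + C (m : ℚ)) * (C (e k) * ∏ t ∈ Finset.range k, (X + C ((t : ℚ) + 1))) =
          C (e k) * ∏ t ∈ Finset.range (k + 1), (X + C ((t : ℚ) + 1)) +
          C (e k * ((m : ℚ) - k - 1)) * ∏ t ∈ Finset.range k, (X + C ((t : ℚ) + 1)) := by
        intro k _
        rw [Finset.prod_range_succ, C_mul]
        simp only [C_sub, C_add, C_1]
        ring
      rw [Finset.sum_congr rfl hterm, Finset.sum_add_distrib]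
      rw [show (Finset.range (n + 1 + 1)) = Finset.range (n + 2) from rfl]
      have hA : ∑ k ∈ Finset.range (n + 2),
          C (if k = 0 then (0 : ℚ) else e (k - 1)) * ∏ t ∈ Finset.range k, (X + C ((t : ℚ) + 1)) =
          ∑ k ∈ Finset.range (n + 1), C (e k) * ∏ t ∈ Finset.range (k + 1), (X + C ((t : ℚ) + 1)) := by
        rw [Finset.sum_range_succ' _ (n + 1)]
        simp
      have hB : ∑ k ∈ Finset.range (n + 2),
          C (e k * ((m : ℚ) - k - 1)) * ∏ t ∈ Finset.range k, (X + C ((t : ℚ) + 1)) =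
          ∑ k ∈ Finset.range (n + 1), C (e k * ((m : ℚ) - k - 1)) * ∏ t ∈ Finset.range k, (X + C ((t : ℚ) + 1)) := by
        rw [Finset.sum_range_succ, hez (n + 1) (by omega)]
        simp
      rw [← hA, ← hB, ← Finset.sum_add_distrib]
      refine Finset.sum_congr rfl fun k _ => ?_
      dsimp only
      rw [C_add, add_mul]

/-- Any polynomial `f ∈ ℚ[s]` of degree `r` with `r` distinct negative integer roots and
positive leading coefficient, i.e. `f = c·∏_{i}(X + a_i)` with `c > 0` and pairwise
distinct integers `a_i ≥ 1`, is a nonnegative `ℚ`-linear combination of the binomial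
polynomials `C(s+k, k) = (s+1)(s+2)⋯(s+k)/k!` for `0 ≤ k ≤ r`. -/
theorem nonneg_combination_of_binomial_polynomials
    (r : ℕ) (f : Polynomial ℚ) (c : ℚ) (hc : 0 < c)
    (a : Fin r → ℤ) (ha : Function.Injective a) (hpos : ∀ i, 1 ≤ a i)
    (hf : f = Polynomial.C c * ∏ i, (Polynomial.X + Polynomial.C ((a i : ℚ)))) :
    ∃ d : Fin (r + 1) → ℚ, (∀ k, 0 ≤ d k) ∧
      f = ∑ k : Fin (r + 1), Polynomial.C (d k) *
        ((Nat.factorial k : ℚ)⁻¹ •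
          ∏ t ∈ Finset.range k, (Polynomial.X + Polynomial.C ((t : ℚ) + 1))) := by
  set s : Finset ℤ := Finset.image a Finset.univ with hsdef
  have hcard : s.card = r := by
    rw [hsdef, Finset.card_image_of_injective _ ha, Finset.card_univ, Fintype.card_fin]
  have hone : ∀ x ∈ s, 1 ≤ x := by
    intro x hx
    obtain ⟨i, _, rfl⟩ := Finset.mem_image.mp hx
    exact hpos i
  obtain ⟨e, he0, hez, heq⟩ := aux_binom r s hcard hone
  have hprod : ∏ i, (X + C ((a i : ℚ))) = ∏ x ∈ s, (X + C (x : ℚ)) := by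
    rw [hsdef, Finset.prod_image (fun i _ j _ h => ha h)]
  refine ⟨fun k => c * (Nat.factorial k : ℚ) * e k, fun k => ?_, ?_⟩
  · exact mul_nonneg (mul_nonneg hc.le (by positivity)) (he0 k)
  · rw [hf, hprod, heq, Finset.mul_sum]
    rw [Fin.sum_univ_eq_sum_range (fun k => C (c * (Nat.factorial k : ℚ) * e k) *
      ((Nat.factorial k : ℚ)⁻¹ • ∏ t ∈ Finset.range k, (X + C ((t : ℚ) + 1))))]
    refine Finset.sum_congr rfl fun k _ => ?_
    have hfac : (Nat.factorial k : ℚ) ≠ 0 := Nat.cast_ne_zero.mpr (Nat.factorial_ne_zero k)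
    set P := ∏ t ∈ Finset.range k, (X + C ((t : ℚ) + 1)) with hP
    have hcoef : c * (Nat.factorial k : ℚ) * e k * ((Nat.factorial k : ℚ))⁻¹ = c * e k := by
      field_simp
    calc C c * (C (e k) * P) = C (c * e k) * P := by rw [C_mul]; ring
      _ = C (c * (Nat.factorial k : ℚ) * e k * ((Nat.factorial k : ℚ))⁻¹) * P := by rw [hcoef]
      _ = C (c * (Nat.factorial k : ℚ) * e k) * (C ((Nat.factorial k : ℚ))⁻¹ * P) := by
          rw [C_mul]; ring
      _ = C (c * (Nat.factorial k : ℚ) * e k) * (((Nat.factorial k : ℚ))⁻¹ • P) := by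
          rw [Polynomial.smul_eq_C_mul]
end

section
/- A polynomial q ∈ ℚ[s] of degree n-1 that takes nonnegative values at all nonnegative integers and has n-1 distinct integer roots, all nonnegative, must have its nonnegative roots occurring in consecutive pairs: if a ≥ 1 is a root then exactly one of a-1, a+1 is also a root (when the root multiplicities are all one), except that 0 may appear as an unpaired root only when the number of nonnegative roots is odd. -/
open Finset

/-- Combinatorial core: a finite set of naturals such that above every non-member
there is an even number of members decomposes into consecutive pairs, possibly
together with the unpaired element `0`. -/
lemma comb_pairs : ∀ (S : Finset ℕ), (∀ j ∉ S, Even ((S.filter (j < ·)).card)) →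
    ∃ B : Finset ℕ,
      (S = B ∪ B.image (· + 1) ∧ S.card = 2 * B.card) ∨
      (S = insert 0 (B ∪ B.image (· + 1)) ∧ 0 ∉ B ∧ S.card = 2 * B.card + 1) := by
  intro S
  induction S using Finset.strongInduction with
  | _ S ih =>
    intro hE
    rcases S.eq_empty_or_nonempty with rfl | hS
    · exact ⟨∅, Or.inl ⟨by simp, by simp⟩⟩
    set m := S.max' hS with hm
    have hmS : m ∈ S := S.max'_mem hS
    have hle : ∀ x ∈ S, x ≤ m := fun x hx => S.le_max' x hx
    rcases Nat.eq_zero_or_pos m with hm0 | hm1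
    · have hsing : S = {0} := by
        apply Finset.eq_singleton_iff_unique_mem.2
        exact ⟨hm0 ▸ hmS, fun x hx => Nat.le_zero.1 (hm0 ▸ hle x hx)⟩
      exact ⟨∅, Or.inr ⟨by simp [hsing], by simp, by simp [hsing]⟩⟩
    · have hm1S : m - 1 ∈ S := by
        by_contra h
        have hev := hE (m - 1) h
        have hfil : S.filter ((m - 1) < ·) = {m} := by
          ext x
          simp only [mem_filter, mem_singleton]
          constructor
          · rintro ⟨hx, hlt⟩
            have := hle x hx
            omega
          · rintro rfl; exact ⟨hmS, by omega⟩
        rw [hfil] at hev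
        simp at hev
      set S' := (S.erase m).erase (m - 1) with hS'
      have hmemS' : ∀ x, x ∈ S' ↔ x ≠ m - 1 ∧ x ≠ m ∧ x ∈ S := by
        intro x; simp [hS', and_assoc]
      have hlt' : ∀ x ∈ S', x < m - 1 := by
        intro x hx
        rw [hmemS'] at hx
        have := hle x hx.2.2
        omega
      have hsub : S' ⊂ S := by
        constructor
        · intro x hx; exact ((hmemS' x).1 hx).2.2
        · intro h
          exact ((hmemS' m).1 (h hmS)).2.1 rfl
      have hE' : ∀ j ∉ S', Even ((S'.filter (j < ·)).card) := by
        intro j hj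
        rcases le_or_gt (m - 1) j with hj1 | hj1
        · have hfe : S'.filter (j < ·) = ∅ := by
            apply Finset.filter_eq_empty_iff.2
            intro x hx
            have := hlt' x hx
            omega
          simp [hfe]
        · have hjS : j ∉ S := by
            intro hjS
            exact hj ((hmemS' j).2 ⟨by omega, by omega, hjS⟩)
          have hev := hE j hjS
          have hfil : S.filter (j < ·) = insert m (insert (m - 1) (S'.filter (j < ·))) := by
            ext x
            simp only [mem_filter, mem_insert, hmemS']
            constructor
            · rintro ⟨hx, hlt⟩
              by_cases h1 : x = m
              · exact Or.inl h1
              by_cases h2 : x = m - 1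
              · exact Or.inr (Or.inl h2)
              · exact Or.inr (Or.inr ⟨⟨h2, h1, hx⟩, hlt⟩)
            · rintro (rfl | rfl | ⟨⟨_, _, hx⟩, hlt⟩)
              · exact ⟨hmS, by omega⟩
              · exact ⟨hm1S, by omega⟩
              · exact ⟨hx, hlt⟩
          have hnm1 : m - 1 ∉ S'.filter (j < ·) := by
            intro h
            exact absurd (hlt' _ (Finset.mem_of_mem_filter _ h)) (by omega)
          have hnm : m ∉ insert (m - 1) (S'.filter (j < ·)) := by
            simp only [mem_insert]
            push_neg
            refine ⟨by omega, fun h => ?_⟩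
            exact absurd (hlt' _ (Finset.mem_of_mem_filter _ h)) (by omega)
          rw [hfil, Finset.card_insert_of_notMem hnm,
            Finset.card_insert_of_notMem hnm1] at hev
          rcases hev with ⟨t, ht⟩
          exact ⟨t - 1, by omega⟩
      obtain ⟨B', hB'⟩ := ih S' hsub hE'
      have hB'sub : ∀ x ∈ B', x < m - 1 := by
        intro x hx
        apply hlt'
        rcases hB' with ⟨h, _⟩ | ⟨h, _, _⟩
        · rw [h]; exact mem_union_left _ hx
        · rw [h]; exact mem_insert_of_mem (mem_union_left _ hx)
      have hm1B' : m - 1 ∉ B' := fun h => absurd (hB'sub _ h) (by omega)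
      have hSins : S = insert m (insert (m - 1) S') := by
        ext x
        simp only [mem_insert, hmemS']
        constructor
        · intro hx
          by_cases h1 : x = m
          · exact Or.inl h1
          by_cases h2 : x = m - 1
          · exact Or.inr (Or.inl h2)
          · exact Or.inr (Or.inr ⟨h2, h1, hx⟩)
        · rintro (rfl | rfl | ⟨_, _, hx⟩)
          · exact hmS
          · exact hm1S
          · exact hx
      have hScard : S.card = S'.card + 2 := by
        rw [hSins, Finset.card_insert_of_notMem, Finset.card_insert_of_notMem]
        · intro h; exact ((hmemS' _).1 h).1 rfl
        · simp only [mem_insert]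
          push_neg
          exact ⟨by omega, fun h => ((hmemS' _).1 h).2.1 rfl⟩
      have hmm : m - 1 + 1 = m := by omega
      have hBcard : (insert (m - 1) B').card = B'.card + 1 :=
        Finset.card_insert_of_notMem hm1B'
      have hunion : insert (m - 1) B' ∪ (insert (m - 1) B').image (· + 1)
          = insert (m - 1) (insert m (B' ∪ B'.image (· + 1))) := by
        rw [Finset.image_insert, hmm]
        ext x
        simp only [mem_union, mem_insert, mem_image]
        tauto
      refine ⟨insert (m - 1) B', ?_⟩
      rcases hB' with ⟨hset, hcard⟩ | ⟨hset, h0, hcard⟩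
      · left
        constructor
        · rw [hunion, hSins, hset, Finset.insert_comm]
        · rw [hScard, hcard, hBcard]; ring
      · right
        have h0S' : 0 ∈ S' := by rw [hset]; exact mem_insert_self _ _
        have h0m : 0 < m - 1 := hlt' 0 h0S'
        refine ⟨?_, ?_, ?_⟩
        · rw [hunion, hSins, hset]
          ext x
          simp only [mem_insert]
          tauto
        · simp only [mem_insert]
          push_neg
          exact ⟨by omega, h0⟩
        · rw [hScard, hcard, hBcard]; ring

/-- A polynomial `q ∈ ℝ[s]` with positive leading coefficient whose roots are distinct
nonnegative integers, and which takes nonnegative values at all nonnegative integers,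
has its roots occurring in consecutive pairs `{b, b+1}`, together possibly with the
unpaired root `0` (the latter happening exactly when the number of roots is odd). -/
theorem nonneg_on_naturals_roots_in_consecutive_pairs
    (r : ℕ) (c : ℝ) (hc : 0 < c) (a : Fin r → ℕ) (ha : Function.Injective a)
    (q : Polynomial ℝ)
    (hq : q = Polynomial.C c * ∏ i, (Polynomial.X - Polynomial.C ((a i : ℝ))))
    (hnn : ∀ j : ℕ, 0 ≤ q.eval (j : ℝ)) :
    ∃ B : Finset ℕ,
      (Finset.image a Finset.univ = B ∪ B.image (· + 1) ∧ r = 2 * B.card) ∨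
      (Finset.image a Finset.univ = insert 0 (B ∪ B.image (· + 1)) ∧ 0 ∉ B ∧
        r = 2 * B.card + 1) := by
  classical
  set S : Finset ℕ := Finset.image a Finset.univ with hSdef
  have hcard : S.card = r := by
    rw [hSdef, Finset.card_image_of_injective _ ha, Finset.card_univ, Fintype.card_fin]
  have hE : ∀ j ∉ S, Even ((S.filter (j < ·)).card) := by
    intro j hj
    have hja : ∀ i, a i ≠ j := by
      intro i h
      exact hj (h ▸ Finset.mem_image_of_mem a (Finset.mem_univ i))
    have heval : q.eval (j : ℝ) = c * ∏ i, ((j : ℝ) - (a i : ℝ)) := by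
      simp [hq, Polynomial.eval_prod]
    have hne : ∀ i, ((j : ℝ) - (a i : ℝ)) ≠ 0 := by
      intro i
      have hne' : (j : ℝ) ≠ (a i : ℝ) := by
        exact_mod_cast (fun h => hja i h.symm : j ≠ a i)
      exact sub_ne_zero_of_ne hne'
    have hpos : 0 < q.eval (j : ℝ) := by
      refine lt_of_le_of_ne (hnn j) (Ne.symm ?_)
      rw [heval]
      exact mul_ne_zero hc.ne' (Finset.prod_ne_zero_iff.2 fun i _ => hne i)
    have hprod : 0 < ∏ i, ((j : ℝ) - (a i : ℝ)) := by
      rw [heval] at hpos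
      rcases mul_pos_iff.mp hpos with ⟨_, h⟩ | ⟨h, _⟩
      · exact h
      · linarith
    set N := Finset.univ.filter (fun i : Fin r => j < a i) with hN
    rw [← Finset.prod_filter_mul_prod_filter_not Finset.univ (fun i => j < a i)] at hprod
    have hP2 : 0 < ∏ i ∈ Finset.univ.filter (fun i : Fin r => ¬ j < a i),
        ((j : ℝ) - (a i : ℝ)) := by
      apply Finset.prod_pos
      intro i hi
      simp only [Finset.mem_filter, not_lt] at hi
      have hlt : a i < j := lt_of_le_of_ne hi.2 (hja i)
      have : (a i : ℝ) < (j : ℝ) := by exact_mod_cast hlt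
      linarith
    have hP1eq : ∏ i ∈ N, ((j : ℝ) - (a i : ℝ))
        = (-1 : ℝ) ^ N.card * ∏ i ∈ N, ((a i : ℝ) - (j : ℝ)) := by
      rw [← Finset.prod_const (-1 : ℝ), ← Finset.prod_mul_distrib]
      apply Finset.prod_congr rfl
      intro i _
      ring
    have hQ : 0 < ∏ i ∈ N, ((a i : ℝ) - (j : ℝ)) := by
      apply Finset.prod_pos
      intro i hi
      simp only [hN, Finset.mem_filter] at hi
      have : (j : ℝ) < (a i : ℝ) := by exact_mod_cast hi.2
      linarith
    have hEvenN : Even N.card := by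
      rcases Nat.even_or_odd N.card with h | h
      · exact h
      · exfalso
        rw [hP1eq, h.neg_one_pow] at hprod
        nlinarith
    have himg : S.filter (j < ·) = N.image a := by
      rw [hSdef, Finset.filter_image]
    have : (S.filter (j < ·)).card = N.card := by
      rw [himg, Finset.card_image_of_injective _ ha]
    rwa [this]
  obtain ⟨B, hB⟩ := comb_pairs S hE
  exact ⟨B, by rwa [hcard] at hB⟩
end
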